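/- Let Ω ⊆ ℂ be non-empty and closed, A ∈ ℂ^{n×n}, and suppose U ∈ U(n) is a global minimizer of f(U) = ‖L(U*AU)‖_F², where L(Â) has entries L_{ij} = 0 for i<j, L_{ii} = Â_{ii} − p_Ω(Â_{ii}), L_{ij} = Â_{ij} for i>j. Then B = U T U*, with T = U*AU − L(U*AU), has all eigenvalues in Ω and minimizes ‖A − X‖_F² over all matrices X with spectrum in Ω. -/

import Mathlib

open Matrix BigOperators

lemma frob_trace {n : ℕ} (M : Matrix (Fin n) (Fin n) ℂ) :
    ((∑ i, ∑ j, ‖M i j‖ ^ 2 : ℝ) : ℂ) = (Mᴴ * M).trace := by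
  rw [Matrix.trace, Finset.sum_comm (γ := Fin n)]
  push_cast
  refine Finset.sum_congr rfl fun j _ => ?_
  rw [Matrix.diag_apply, Matrix.mul_apply]
  refine Finset.sum_congr rfl fun i _ => ?_
  rw [Matrix.conjTranspose_apply, Complex.star_def, ← Complex.normSq_eq_conj_mul_self,
    ← Complex.ofReal_pow, Complex.sq_norm]

lemma frob_conj_inv {n : ℕ} {V : Matrix (Fin n) (Fin n) ℂ}
    (hV : V ∈ Matrix.unitaryGroup (Fin n) ℂ) (M : Matrix (Fin n) (Fin n) ℂ) :
    ∑ i, ∑ j, ‖(star V * M * V) i j‖ ^ 2 = ∑ i, ∑ j, ‖M i j‖ ^ 2 := by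
  have h1 : V * star V = 1 := (Matrix.mem_unitaryGroup_iff).mp hV
  apply Complex.ofReal_injective
  rw [frob_trace, frob_trace]
  have hct : (star V * M * V)ᴴ = star V * Mᴴ * V := by
    simp [Matrix.conjTranspose_mul, Matrix.star_eq_conjTranspose, Matrix.mul_assoc]
  rw [hct]
  have h2 : star V * Mᴴ * V * star V = star V * Mᴴ := by
    rw [Matrix.mul_assoc, h1, Matrix.mul_one]
  have this1 : star V * Mᴴ * V * (star V * M * V) = star V * (Mᴴ * M) * V := by
    simp only [← Matrix.mul_assoc]
    rw [h2]
  rw [this1, Matrix.mul_assoc, Matrix.trace_mul_comm]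
  rw [Matrix.mul_assoc, h1, Matrix.mul_one]


lemma spec_tri {n : ℕ} {S : Matrix (Fin n) (Fin n) ℂ} (hS : ∀ i j, j < i → S i j = 0)
    (μ : ℂ) : μ ∈ spectrum ℂ S ↔ ∃ i, S i i = μ := by
  rw [spectrum.mem_iff]
  have htri : ((algebraMap ℂ (Matrix (Fin n) (Fin n) ℂ)) μ - S).BlockTriangular id := by
    intro i j hij
    simp only [Matrix.sub_apply, Matrix.algebraMap_matrix_apply]
    have hij' : j < i := hij
    rw [if_neg hij'.ne', hS i j hij', sub_zero]
  rw [Matrix.isUnit_iff_isUnit_det, Matrix.det_of_upperTriangular htri, isUnit_iff_ne_zero,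
    not_ne_iff, Finset.prod_eq_zero_iff]
  simp only [Matrix.sub_apply, Matrix.algebraMap_matrix_apply, if_pos rfl,
    Algebra.algebraMap_self, RingHom.id_apply, Finset.mem_univ, true_and, sub_eq_zero]
  exact ⟨fun ⟨i, h⟩ => ⟨i, h.symm⟩, fun ⟨i, h⟩ => ⟨i, h.symm⟩⟩

lemma spec_conj {n : ℕ} {V : Matrix (Fin n) (Fin n) ℂ}
    (hV : V ∈ Matrix.unitaryGroup (Fin n) ℂ) (X : Matrix (Fin n) (Fin n) ℂ) :
    spectrum ℂ (star V * X * V) = spectrum ℂ X := by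
  have h2 : star V * V = 1 := (Matrix.mem_unitaryGroup_iff').mp hV
  ext μ
  rw [spectrum.mem_iff, spectrum.mem_iff, not_iff_not,
    Matrix.isUnit_iff_isUnit_det, Matrix.isUnit_iff_isUnit_det]
  have key : (algebraMap ℂ (Matrix (Fin n) (Fin n) ℂ)) μ - star V * X * V
      = star V * ((algebraMap ℂ (Matrix (Fin n) (Fin n) ℂ)) μ - X) * V := by
    rw [Matrix.mul_sub, Matrix.sub_mul]
    congr 1
    rw [Algebra.algebraMap_eq_smul_one, Matrix.mul_smul, Matrix.mul_one, Matrix.smul_mul, h2]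
  have hd : (star V).det * V.det = 1 := by rw [← Matrix.det_mul, h2, Matrix.det_one]
  have hVd : V.det ≠ 0 := fun h => by simp [h] at hd
  have hVs : (star V).det ≠ 0 := fun h => by simp [h] at hd
  rw [key, Matrix.det_mul, Matrix.det_mul, isUnit_iff_ne_zero, isUnit_iff_ne_zero]
  simp [mul_ne_zero_iff, hVd, hVs]


lemma schur : ∀ (n : ℕ) (X : Matrix (Fin n) (Fin n) ℂ),
    ∃ V ∈ Matrix.unitaryGroup (Fin n) ℂ, ∀ i j : Fin n, j < i → (star V * X * V) i j = 0 := by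
  intro n
  induction n with
  | zero => exact fun X => ⟨1, Submonoid.one_mem _, fun i => i.elim0⟩
  | succ n IH =>
    intro X
    obtain ⟨μ, hμ⟩ := spectrum.nonempty_of_isAlgClosed_of_finiteDimensional ℂ X
    rw [spectrum.mem_iff] at hμ
    have hdet : ((algebraMap ℂ (Matrix (Fin (n+1)) (Fin (n+1)) ℂ)) μ - X).det = 0 := by
      by_contra h
      exact hμ ((Matrix.isUnit_iff_isUnit_det _).mpr (isUnit_iff_ne_zero.mpr h))
    obtain ⟨v, hv0, hv⟩ := (Matrix.exists_mulVec_eq_zero_iff).mpr hdet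
    have hXv : X *ᵥ v = μ • v := by
      funext i
      have h1 := congrFun hv i
      simp only [Matrix.sub_mulVec, Pi.sub_apply, Pi.zero_apply, sub_eq_zero] at h1
      rw [Algebra.algebraMap_eq_smul_one, Matrix.smul_mulVec, Matrix.one_mulVec] at h1
      exact h1.symm
    set ve : EuclideanSpace ℂ (Fin (n+1)) := (WithLp.equiv 2 (Fin (n+1) → ℂ)).symm v with hvedef
    have hve : ve ≠ 0 := by
      intro h
      apply hv0
      funext k
      exact congrArg (fun x : EuclideanSpace ℂ (Fin (n+1)) => WithLp.ofLp x k) h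
    set w : EuclideanSpace ℂ (Fin (n+1)) := (‖ve‖ : ℂ)⁻¹ • ve with hw
    have hnw : ‖w‖ = 1 := by
      rw [hw, norm_smul]
      simp [norm_inv]
      exact inv_mul_cancel₀ (norm_ne_zero_iff.mpr hve)
    have hXw : X *ᵥ (w : Fin (n+1) → ℂ) = μ • (w : Fin (n+1) → ℂ) := by
      show X *ᵥ ((‖ve‖ : ℂ)⁻¹ • v) = μ • ((‖ve‖ : ℂ)⁻¹ • v)
      rw [Matrix.mulVec_smul, hXv, smul_comm]
    have hcard : Module.finrank ℂ (EuclideanSpace ℂ (Fin (n+1))) = Fintype.card (Fin (n+1)) := by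
      simp [finrank_euclideanSpace]
    have horth : Orthonormal ℂ (Set.restrict {(0 : Fin (n+1))} (fun _ => w)) := by
      constructor
      · rintro ⟨i, hi⟩; exact hnw
      · intro i j hij
        exact absurd (Subsingleton.elim i j) hij
    obtain ⟨b, hb⟩ : ∃ b : OrthonormalBasis (Fin (n+1)) ℂ (EuclideanSpace ℂ (Fin (n+1))), ∀ i ∈ ({0} : Set (Fin (n+1))), b i = w := horth.exists_orthonormalBasis_extension_of_card_eq hcard
    have hb0 : b 0 = w := hb 0 rfl
    -- inner product formula
    have hinner : ∀ x y : EuclideanSpace ℂ (Fin (n+1)), (inner ℂ x y : ℂ) = ∑ k, star (x k) * y k := by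
      intro x y
      rw [PiLp.inner_apply]
      simp only [RCLike.inner_apply', starRingEnd_apply]
    have hbo : ∀ i j : Fin (n+1), (inner ℂ (b i) (b j) : ℂ) = if i = j then 1 else 0 :=
      orthonormal_iff_ite.mp b.orthonormal
    -- the unitary W whose columns are b
    set W : Matrix (Fin (n+1)) (Fin (n+1)) ℂ := Matrix.of fun i j => b j i with hWdef
    have hWu : W ∈ Matrix.unitaryGroup (Fin (n+1)) ℂ := by
      rw [Matrix.mem_unitaryGroup_iff']
      ext i j
      rw [Matrix.mul_apply, Matrix.one_apply, ← hbo i j, hinner]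
      refine Finset.sum_congr rfl fun k _ => ?_
      rw [Matrix.star_apply]
      rfl
    set M : Matrix (Fin (n+1)) (Fin (n+1)) ℂ := star W * X * W with hMdef
    have hXWk : ∀ k, (X * W) k 0 = μ * w k := by
      intro k
      have h1 : (X * W) k 0 = (X *ᵥ (w : Fin (n+1) → ℂ)) k := by
        rw [Matrix.mul_apply]
        show _ = ∑ j, X k j * w j
        refine Finset.sum_congr rfl fun j _ => ?_
        show X k j * b 0 j = X k j * w j
        rw [hb0]
      rw [h1, hXw]
      rfl
    have hcol : ∀ i : Fin (n+1), i ≠ 0 → M i 0 = 0 := by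
      intro i hi
      have key : M i 0 = μ * (inner ℂ (b i) (b 0) : ℂ) := by
        rw [hMdef, Matrix.mul_assoc, Matrix.mul_apply, hinner, hb0, Finset.mul_sum]
        refine Finset.sum_congr rfl fun k _ => ?_
        rw [Matrix.star_apply, hXWk k]
        show star (b i k) * (μ * w k) = μ * (star (b i k) * w k)
        ring
      rw [key, hbo, if_neg hi, mul_zero]
    -- inductive step on the (n × n) block
    set X' : Matrix (Fin n) (Fin n) ℂ := Matrix.of (fun i j => M i.succ j.succ) with hX'def
    obtain ⟨V', hV'u, hV'⟩ := IH X'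
    set Em : Matrix (Fin (n+1)) (Fin (n+1)) ℂ := Matrix.of (fun i j =>
      if hi : i = 0 then (if j = 0 then (1:ℂ) else 0)
      else if hj : j = 0 then 0 else V' (i.pred hi) (j.pred hj)) with hEm
    have hE00 : Em 0 0 = 1 := by simp [hEm]
    have hE0s : ∀ j : Fin n, Em 0 j.succ = 0 := fun j => by
      simp [hEm, Fin.succ_ne_zero j]
    have hEs0 : ∀ i : Fin n, Em i.succ 0 = 0 := fun i => by
      simp [hEm, Fin.succ_ne_zero i]
    have hEss : ∀ i j : Fin n, Em i.succ j.succ = V' i j := fun i j => by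
      simp [hEm, Fin.succ_ne_zero, Fin.pred_succ]
    have h2' : star V' * V' = 1 := Matrix.mem_unitaryGroup_iff'.mp hV'u
    have hEu : Em ∈ Matrix.unitaryGroup (Fin (n+1)) ℂ := by
      rw [Matrix.mem_unitaryGroup_iff']
      ext i j
      rw [Matrix.mul_apply, Fin.sum_univ_succ]
      simp only [Matrix.star_apply]
      rcases Fin.eq_zero_or_eq_succ i with rfl | ⟨i', rfl⟩ <;>
        rcases Fin.eq_zero_or_eq_succ j with rfl | ⟨j', rfl⟩
      · simp [hE00, hEs0, Matrix.one_apply]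
      · simp [hE00, hE0s, hEs0, Matrix.one_apply, (Fin.succ_ne_zero j').symm]
      · simp [hE00, hE0s, hEs0, Matrix.one_apply, Fin.succ_ne_zero i']
      · have hh : ∑ k : Fin n, star (Em k.succ i'.succ) * Em k.succ j'.succ
            = (1 : Matrix (Fin n) (Fin n) ℂ) i' j' := by
          rw [← h2', Matrix.mul_apply]
          refine Finset.sum_congr rfl fun k _ => ?_
          rw [hEss, hEss, Matrix.star_apply]
        rw [hE0s i', hE0s j']
        simp only [star_zero, zero_mul, zero_add]
        rw [hh, Matrix.one_apply, Matrix.one_apply]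
        simp [Fin.succ_inj]
    refine ⟨W * Em, Submonoid.mul_mem _ hWu hEu, ?_⟩
    have hconj : star (W * Em) * X * (W * Em) = star Em * M * Em := by
      rw [hMdef, Matrix.star_mul]
      simp only [Matrix.mul_assoc]
    rw [hconj]
    intro i j hij
    rw [Matrix.mul_assoc, Matrix.mul_apply]
    simp only [Matrix.star_apply]
    rcases Fin.eq_zero_or_eq_succ j with rfl | ⟨j', rfl⟩
    · obtain ⟨i', rfl⟩ : ∃ i' : Fin n, i = i'.succ := by
        rcases Fin.eq_zero_or_eq_succ i with rfl | h
        · exact absurd hij (lt_irrefl 0)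
        · exact h
      have hME : ∀ k, (M * Em) k 0 = M k 0 := by
        intro k
        rw [Matrix.mul_apply, Fin.sum_univ_succ, hE00, mul_one]
        simp [hEs0]
      rw [Fin.sum_univ_succ]
      rw [hE0s i']
      simp only [star_zero, zero_mul, zero_add]
      refine Finset.sum_eq_zero fun k _ => ?_
      rw [hME, hcol _ (Fin.succ_ne_zero k), mul_zero]
    · obtain ⟨i', rfl⟩ : ∃ i' : Fin n, i = i'.succ := by
        rcases Fin.eq_zero_or_eq_succ i with rfl | h
        · exact absurd hij (Fin.not_lt_zero _)
        · exact h
      have hij' : j' < i' := by rwa [Fin.succ_lt_succ_iff] at hij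
      have hME : ∀ k, (M * Em) k j'.succ = ∑ l : Fin n, M k l.succ * V' l j' := by
        intro k
        rw [Matrix.mul_apply, Fin.sum_univ_succ, hE0s j', mul_zero, zero_add]
        exact Finset.sum_congr rfl fun l _ => by rw [hEss]
      rw [Fin.sum_univ_succ, hE0s i']
      simp only [star_zero, zero_mul, zero_add]
      have hgoal := hV' i' j' hij'
      rw [Matrix.mul_assoc, Matrix.mul_apply] at hgoal
      rw [← hgoal]
      refine Finset.sum_congr rfl fun k _ => ?_
      rw [hEss, Matrix.star_apply, hME, Matrix.mul_apply]
      rfl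

/-- If U globally minimizes ‖L(U*AU)‖_F² over the unitary group, then B = U T U*, with
T the triangular projection of U*AU, is a global minimizer of the nearest Ω-stable
matrix problem. -/
theorem stmt_2 (n : ℕ) (Ω : Set ℂ) (hΩne : Ω.Nonempty) (hΩcl : IsClosed Ω)
    (p : ℂ → ℂ) (hp_mem : ∀ z, p z ∈ Ω)
    (hp_near : ∀ z, ∀ x ∈ Ω, ‖z - p z‖ ≤ ‖z - x‖)
    (A : Matrix (Fin n) (Fin n) ℂ)
    (L : Matrix (Fin n) (Fin n) ℂ → Matrix (Fin n) (Fin n) ℂ)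
    (hL : ∀ M : Matrix (Fin n) (Fin n) ℂ, ∀ i j : Fin n,
      L M i j = if i < j then 0 else if i = j then M i i - p (M i i) else M i j)
    (f : Matrix (Fin n) (Fin n) ℂ → ℝ)
    (hf : ∀ U, f U = ∑ i, ∑ j, ‖L (Uᴴ * A * U) i j‖ ^ 2)
    (U : Matrix (Fin n) (Fin n) ℂ) (hU : U ∈ Matrix.unitaryGroup (Fin n) ℂ)
    (hmin : ∀ V ∈ Matrix.unitaryGroup (Fin n) ℂ, f U ≤ f V)
    (T B : Matrix (Fin n) (Fin n) ℂ)
    (hT : T = Uᴴ * A * U - L (Uᴴ * A * U))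
    (hB : B = U * T * Uᴴ) :
    spectrum ℂ B ⊆ Ω ∧
    ∀ X : Matrix (Fin n) (Fin n) ℂ, spectrum ℂ X ⊆ Ω →
      ∑ i, ∑ j, ‖A i j - B i j‖ ^ 2 ≤
        ∑ i, ∑ j, ‖A i j - X i j‖ ^ 2 := by
  have hUstar : Uᴴ ∈ Matrix.unitaryGroup (Fin n) ℂ := by
    rw [← Matrix.star_eq_conjTranspose]
    exact Unitary.star_mem hU
  have hU2 : star U * U = 1 := Matrix.mem_unitaryGroup_iff'.mp hU
  set M : Matrix (Fin n) (Fin n) ℂ := Uᴴ * A * U with hM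
  have hTtri : ∀ i j : Fin n, j < i → T i j = 0 := by
    intro i j hij
    rw [hT, Matrix.sub_apply, hL]
    rw [if_neg (not_lt.mpr hij.le), if_neg hij.ne', sub_self]
  have hTdiag : ∀ i : Fin n, T i i = p (M i i) := by
    intro i
    rw [hT, Matrix.sub_apply, hL, if_neg (lt_irrefl i), if_pos rfl]
    ring
  constructor
  · -- spectrum of B is contained in Ω
    have hBspec : spectrum ℂ B = spectrum ℂ T := by
      have h := spec_conj hUstar T
      rw [Matrix.star_eq_conjTranspose, Matrix.conjTranspose_conjTranspose] at h
      rw [hB]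
      exact h
    rw [hBspec]
    intro z hz
    obtain ⟨i, hi⟩ := (spec_tri hTtri z).mp hz
    rw [← hi, hTdiag]
    exact hp_mem _
  · intro X hX
    -- the value at B equals f U
    have hABU : star U * (A - B) * U = L M := by
      rw [hB, hT, Matrix.mul_sub, Matrix.sub_mul]
      have h1 : star U * (U * (M - L M) * Uᴴ) * U = M - L M := by
        rw [← Matrix.star_eq_conjTranspose]
        calc star U * (U * (M - L M) * star U) * U
            = (star U * U) * (M - L M) * (star U * U) := by
              simp only [Matrix.mul_assoc]
          _ = M - L M := by rw [hU2, Matrix.one_mul, Matrix.mul_one]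
      rw [h1, hM]
      rw [Matrix.star_eq_conjTranspose]
      abel
    have key1 : ∑ i, ∑ j, ‖A i j - B i j‖ ^ 2 = f U := by
      rw [hf U]
      have hfold : ∑ i, ∑ j, ‖A i j - B i j‖ ^ 2
          = ∑ i, ∑ j, ‖(A - B) i j‖ ^ 2 := by simp only [Matrix.sub_apply]
      rw [hfold, ← frob_conj_inv hU (A - B), hABU]
    -- Schur triangulation of X
    obtain ⟨V, hV, htri⟩ := schur n X
    set S : Matrix (Fin n) (Fin n) ℂ := star V * X * V with hS
    set N : Matrix (Fin n) (Fin n) ℂ := star V * A * V with hN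
    have hdiagΩ : ∀ i, S i i ∈ Ω := by
      intro i
      have h1 : S i i ∈ spectrum ℂ S := (spec_tri htri (S i i)).mpr ⟨i, rfl⟩
      rw [hS, spec_conj hV X] at h1
      exact hX h1
    have e2 : ∑ i, ∑ j, ‖A i j - X i j‖ ^ 2
        = ∑ i, ∑ j, ‖N i j - S i j‖ ^ 2 := by
      have hfold : ∑ i, ∑ j, ‖A i j - X i j‖ ^ 2
          = ∑ i, ∑ j, ‖(A - X) i j‖ ^ 2 := by simp only [Matrix.sub_apply]
      rw [hfold, ← frob_conj_inv hV (A - X)]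
      refine Finset.sum_congr rfl fun i _ => Finset.sum_congr rfl fun j _ => ?_
      have : (star V * (A - X) * V) i j = N i j - S i j := by
        rw [Matrix.mul_sub, Matrix.sub_mul, Matrix.sub_apply, hN, hS]
      rw [this]
    have e3 : f V ≤ ∑ i, ∑ j, ‖N i j - S i j‖ ^ 2 := by
      rw [hf V]
      have hVN : Vᴴ * A * V = N := by rw [hN, Matrix.star_eq_conjTranspose]
      rw [hVN]
      refine Finset.sum_le_sum fun i _ => Finset.sum_le_sum fun j _ => ?_
      rw [hL]
      rcases lt_trichotomy i j with hlt | heq | hgt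
      · rw [if_pos hlt]
        simp only [norm_zero, zero_pow, OfNat.ofNat_ne_zero, ne_eq, not_false_iff]
        positivity
      · rw [if_neg (by rw [heq]; exact lt_irrefl j), if_pos heq]
        subst heq
        exact pow_le_pow_left₀ (norm_nonneg _) (hp_near (N i i) (S i i) (hdiagΩ i)) 2
      · rw [if_neg (not_lt.mpr hgt.le), if_neg (ne_of_gt hgt), htri i j hgt, sub_zero]
    calc ∑ i, ∑ j, ‖A i j - B i j‖ ^ 2 = f U := key1
      _ ≤ f V := hmin V hV
      _ ≤ ∑ i, ∑ j, ‖N i j - S i j‖ ^ 2 := e3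
      _ = ∑ i, ∑ j, ‖A i j - X i j‖ ^ 2 := e2.symm
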